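/- Let (X, 𝓑) be a ball space such that for every z ∈ X, the poset (𝓑(z), ⊆), where 𝓑(z) := {B ∈ 𝓑 : z ∈ B}, is narrow and admits only countable strictly increasing sequences (there is no strictly increasing ω₁-indexed sequence in (𝓑(z), ⊊)). Then (X, 𝓑) is chain union stable. -/

import Mathlib

open Set

section BasicDefs

variable {X : Type*}

/-- `cu 𝓑` is the family of all unions of nonempty inclusion-chains contained in `𝓑`. -/
def cu (B : Set (Set X)) : Set (Set X) :=
  {U | ∃ C : Set (Set X), C ⊆ B ∧ C.Nonempty ∧ IsChain (· ⊆ ·) C ∧ U = ⋃₀ C}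

/-- A family of balls is chain union closed if it coincides with its family of chain unions. -/
def ChainUnionClosed (B : Set (Set X)) : Prop := cu B = B

/-- A ball space is chain union stable if `cu 𝓑` is chain union closed. -/
def ChainUnionStable (B : Set (Set X)) : Prop := ChainUnionClosed (cu B)

/-- Spherical completeness: every nonempty chain of balls has nonempty intersection. -/
def SphericallyComplete (B : Set (Set X)) : Prop :=
  ∀ C : Set (Set X), C ⊆ B → C.Nonempty → IsChain (· ⊆ ·) C → (⋂₀ C).Nonempty

/-- A ball space: a nonempty collection of nonempty subsets (of a nonempty set `X`). -/
def IsBallSpace (B : Set (Set X)) : Prop := B.Nonempty ∧ ∀ S ∈ B, S.Nonempty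

end BasicDefs

section NarrowDefs

/-- A poset is narrow if it contains no infinite set of pairwise incomparable elements. -/
def IsNarrow (P : Type*) [PartialOrder P] : Prop :=
  ∀ A : Set P, (∀ a ∈ A, ∀ b ∈ A, a ≠ b → ¬a ≤ b ∧ ¬b ≤ a) → A.Finite

/-- A family of sets is narrow (as a poset under inclusion) if it contains no infinite
subfamily of pairwise `⊆`-incomparable sets. -/
def IsNarrowFamily {X : Type*} (F : Set (Set X)) : Prop :=
  ∀ A ⊆ F, (∀ a ∈ A, ∀ b ∈ A, a ≠ b → ¬a ⊆ b ∧ ¬b ⊆ a) → A.Finite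

end NarrowDefs

section BallsAtDef

variable {X : Type*}

/-- The family of balls containing a given point `z`. -/
def ballsAt (B : Set (Set X)) (z : X) : Set (Set X) := {S ∈ B | z ∈ S}

end BallsAtDef

noncomputable section
namespace NarrowAux
open Ordinal Set Cardinal Filter
universe u v

lemma iio_countable (i : (Ordinal.omega.{u} 1).ToType) : (Set.Iio i).Countable := by
  have h1 := @Ordinal.card_typein ((Ordinal.omega.{u} 1).ToType) (· < ·) isWellOrder_lt i
  have h2 := Ordinal.typein_lt_self (o := Ordinal.omega.{u} 1) i
  rw [Cardinal.countable_iff_lt_aleph_one]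
  have he : #(Set.Iio i) = #{y // y < i} := rfl
  rw [he, ← h1]
  have h3 : (@Ordinal.typein ((Ordinal.omega.{u} 1).ToType) (· < ·) isWellOrder_lt) i
      < (Cardinal.aleph 1).ord := by
    rw [Cardinal.ord_aleph]; exact h2
  exact Cardinal.lt_ord.1 h3

lemma toType_omega1_uncountable : ¬ (Set.univ : Set (Ordinal.omega 1).ToType).Countable := by
  rw [Cardinal.countable_iff_lt_aleph_one _, Cardinal.mk_univ, Cardinal.mk_toType, Ordinal.card_omega]
  exact lt_irrefl _

instance : Nonempty (Ordinal.omega 1).ToType :=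
  Ordinal.toType_nonempty_iff_ne_zero.2 (Ordinal.omega_pos 1).ne'

lemma exists_gt_of_countable {s : Set (Ordinal.omega 1).ToType} (hs : s.Countable) :
    ∃ θ, ∀ x ∈ s, x < θ := by
  by_contra h
  push_neg at h
  apply toType_omega1_uncountable
  have : (Set.univ : Set (Ordinal.omega 1).ToType) ⊆ ⋃ x ∈ s, Set.Iic x := by
    intro θ _
    obtain ⟨x, hx, hθ⟩ := h θ
    exact Set.mem_biUnion hx hθ
  refine Set.Countable.mono this (hs.biUnion fun x _ => ?_)
  have : Set.Iic x = Set.Iio x ∪ {x} := by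
    ext y; simp [le_iff_lt_or_eq]
  rw [this]
  exact (iio_countable x).union (Set.countable_singleton x)

lemma omega1_rec {β : Type*} [Nonempty β] (Q : Set β → β → Prop)
    (h : ∀ s : Set β, s.Countable → ∃ b, Q s b) :
    ∃ f : (Ordinal.omega 1).ToType → β, ∀ i, Q (f '' Set.Iio i) (f i) := by
  have key : ∀ i : (Ordinal.omega 1).ToType, ∀ g : ∀ j, j < i → β,
      ∃ b, Q {b | ∃ j, ∃ hj : j < i, g j hj = b} b := by
    intro i g
    apply h
    have he : {b | ∃ j, ∃ hj : j < i, g j hj = b}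
        = (fun p : {j // j < i} => g p.1 p.2) '' Set.univ := by
      ext b
      constructor
      · rintro ⟨j, hj, rfl⟩; exact ⟨⟨j, hj⟩, trivial, rfl⟩
      · rintro ⟨⟨j, hj⟩, -, rfl⟩; exact ⟨j, hj, rfl⟩
    rw [he]
    have : Countable {j // j < i} := (iio_countable i).to_subtype
    exact Set.countable_univ.image _
  let wf : WellFounded (· < · : (Ordinal.omega 1).ToType → _ → Prop) :=
    IsWellFounded.wf
  let f : (Ordinal.omega 1).ToType → β :=
    wf.fix (C := fun _ => β) (fun i ih => Classical.choose (key i ih))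
  refine ⟨f, fun i => ?_⟩
  have hfix : f i = Classical.choose (key i (fun j _ => f j)) := by
    exact WellFounded.fix_eq wf _ i
  have hq := Classical.choose_spec (key i (fun j _ => f j))
  rw [← hfix] at hq
  have : {b | ∃ j, ∃ _ : j < i, f j = b} = f '' Set.Iio i := by
    ext b
    constructor
    · rintro ⟨j, hj, rfl⟩; exact ⟨j, hj, rfl⟩
    · rintro ⟨j, hj, rfl⟩; exact ⟨j, hj, rfl⟩
  rwa [this] at hq
variable {X : Type u}

/-- Erdős–Dushnik–Miller style contradiction: a "forward-only" `ω₁`-sequence of balls in a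
narrow short family is impossible. -/
lemma edm {F : Set (Set X)}
    (hnar : ∀ A ⊆ F, (∀ a ∈ A, ∀ b ∈ A, a ≠ b → ¬a ⊆ b ∧ ¬b ⊆ a) → A.Finite)
    (hsh : ¬∃ f : (Ordinal.omega.{v} 1).ToType → Set X,
      (∀ i, f i ∈ F) ∧ ∀ i j, i < j → f i ⊂ f j)
    (b : (Ordinal.omega.{v} 1).ToType → Set X) (hbF : ∀ i, b i ∈ F)
    (hfwd : ∀ j i, j < i → ¬ b i ⊆ b j) : False := by
  classical
  let N : (Ordinal.omega.{v} 1).ToType → Set (Ordinal.omega.{v} 1).ToType :=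
    fun x => {y | ¬ b x ⊆ b y ∧ ¬ b y ⊆ b x}
  -- Claim: no uncountable set has all its incomparability-neighborhoods countable.
  have claimS : ∀ A : Set (Ordinal.omega.{v} 1).ToType, ¬ A.Countable → ¬ (∀ x ∈ A, (N x ∩ A).Countable) := by
    intro A hA hsmall
    have hQ : ∀ s : Set (Ordinal.omega.{v} 1).ToType, s.Countable →
        ∃ y, (s ⊆ A → (y ∈ A ∧ ∀ x ∈ s, x < y ∧ y ∉ N x)) := by
      intro s hs
      by_cases hsA : s ⊆ A
      · have hbad : ((⋃ x ∈ s, (N x ∩ A)) ∪ ⋃ x ∈ s, Set.Iic x).Countable := by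
          refine Set.Countable.union ?_ ?_
          · exact hs.biUnion fun x hx => hsmall x (hsA hx)
          · refine hs.biUnion fun x _ => ?_
            have : Set.Iic x = Set.Iio x ∪ {x} := by
              ext y; simp [le_iff_lt_or_eq]
            rw [this]
            exact (iio_countable x).union (Set.countable_singleton x)
        have hne : (A \ ((⋃ x ∈ s, (N x ∩ A)) ∪ ⋃ x ∈ s, Set.Iic x)).Nonempty := by
          rw [Set.nonempty_iff_ne_empty]
          intro hemp
          exact hA (Set.Countable.mono (by
            intro a ha
            by_contra hcon
            exact (Set.eq_empty_iff_forall_notMem.1 hemp a) ⟨ha, hcon⟩) hbad)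
        obtain ⟨y, hyA, hyn⟩ := hne
        refine ⟨y, fun _ => ⟨hyA, fun x hx => ?_⟩⟩
        constructor
        · by_contra hyx
          exact hyn (Set.mem_union_right _ (Set.mem_biUnion hx (not_lt.1 hyx)))
        · intro hmemN
          exact hyn (Set.mem_union_left _ (Set.mem_biUnion hx ⟨hmemN, hyA⟩))
      · exact ⟨Classical.arbitrary _, fun h => absurd h hsA⟩
    obtain ⟨f, hf⟩ := omega1_rec.{v}
      (Q := fun s y => s ⊆ A → (y ∈ A ∧ ∀ x ∈ s, x < y ∧ y ∉ N x)) hQ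
    · have hmem : ∀ i, f i ∈ A := by
        intro i
        induction i using WellFoundedLT.induction with
        | ind i ih =>
          refine (hf i ?_).1
          rintro _ ⟨j, hj, rfl⟩
          exact ih j hj
      refine hsh ⟨fun i => b (f i), fun i => hbF _, fun i j hij => ?_⟩
      have hsub : f '' Set.Iio j ⊆ A := by rintro _ ⟨k, _, rfl⟩; exact hmem k
      obtain ⟨-, hall⟩ := hf j hsub
      obtain ⟨hlt, hnN⟩ := hall (f i) ⟨i, hij, rfl⟩
      have hcmp : b (f i) ⊆ b (f j) := by
        by_contra hcon
        exact hnN ⟨hcon, hfwd _ _ hlt⟩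
      refine ⟨hcmp, fun hback => hfwd _ _ hlt hback⟩
  have sel : ∀ A : Set (Ordinal.omega.{v} 1).ToType, ¬ A.Countable →
      ∃ x, x ∈ A ∧ ¬ (N x ∩ A).Countable := by
    intro A hA
    by_contra h
    push_neg at h
    exact claimS A hA h
  -- ω-recursion shrinking uncountable sets
  have huniv : ¬ (Set.univ : Set (Ordinal.omega.{v} 1).ToType).Countable :=
    toType_omega1_uncountable
  have hstep : ∀ A : Set (Ordinal.omega.{v} 1).ToType, ∀ hA : ¬ A.Countable,
      ¬ ((N (Classical.choose (sel A hA)) ∩ A) \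
          {Classical.choose (sel A hA)}).Countable := by
    intro A hA
    have hspec := Classical.choose_spec (sel A hA)
    intro hcnt
    apply hspec.2
    have : N (Classical.choose (sel A hA)) ∩ A ⊆
        ((N (Classical.choose (sel A hA)) ∩ A) \ {Classical.choose (sel A hA)}) ∪
          {Classical.choose (sel A hA)} := by
      intro y hy
      by_cases hy' : y = Classical.choose (sel A hA)
      · exact Set.mem_union_right _ (by simp [hy'])
      · exact Set.mem_union_left _ ⟨hy, by simp [hy']⟩
    exact Set.Countable.mono this (hcnt.union (Set.countable_singleton _))
  let T : ℕ → {A : Set (Ordinal.omega.{v} 1).ToType // ¬ A.Countable} := fun n =>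
    Nat.rec ⟨Set.univ, huniv⟩
      (fun _ p => ⟨(N (Classical.choose (sel p.1 p.2)) ∩ p.1) \
        {Classical.choose (sel p.1 p.2)}, hstep p.1 p.2⟩) n
  let x : ℕ → (Ordinal.omega.{v} 1).ToType := fun n => Classical.choose (sel (T n).1 (T n).2)
  have hxmem : ∀ n, x n ∈ (T n).1 := fun n => (Classical.choose_spec (sel (T n).1 (T n).2)).1
  have hTsucc : ∀ n, (T (n + 1)).1 = (N (x n) ∩ (T n).1) \ {x n} := fun n => rfl
  have hTsub : ∀ n, (T (n + 1)).1 ⊆ (T n).1 := by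
    intro n y hy
    rw [hTsucc] at hy
    exact hy.1.2
  have hTle : ∀ n m, n ≤ m → (T m).1 ⊆ (T n).1 := by
    intro n m h
    induction m with
    | zero =>
      have : n = 0 := Nat.le_zero.1 h
      subst this; exact fun y hy => hy
    | succ m ih =>
      rcases Nat.lt_or_ge n (m + 1) with h' | h'
      · exact (hTsub m).trans (ih (Nat.lt_succ_iff.1 h'))
      · have : n = m + 1 := le_antisymm h h'
        subst this; exact fun y hy => hy
  have hincomp : ∀ n m, n < m → x m ∈ N (x n) ∧ x m ≠ x n := by
    intro n m hnm
    have : x m ∈ (T (n + 1)).1 := hTle (n + 1) m hnm (hxmem m)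
    rw [hTsucc] at this
    exact ⟨this.1.1, by simpa using this.2⟩
  -- infinite antichain
  have hinj : Function.Injective (fun n => b (x n)) := by
    intro n m hnm
    by_contra hne
    rcases Nat.lt_or_ge n m with h | h
    · have := (hincomp n m h).1
      exact this.1 (le_of_eq hnm)
    · have hlt : m < n := lt_of_le_of_ne h (Ne.symm hne)
      have := (hincomp m n hlt).1
      exact this.1 (le_of_eq hnm.symm)
  have hfin := hnar (Set.range fun n => b (x n)) (by rintro _ ⟨n, rfl⟩; exact hbF _) ?_
  · exact (Set.infinite_range_of_injective hinj) hfin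
  · rintro _ ⟨n, rfl⟩ _ ⟨m, rfl⟩ hne
    rcases Nat.lt_or_ge n m with h | h
    · have h1 := (hincomp n m h).1
      exact ⟨h1.1, h1.2⟩
    · have hlt : m < n := lt_of_le_of_ne h (by rintro rfl; exact hne rfl)
      have h1 := (hincomp m n hlt).1
      exact ⟨h1.2, h1.1⟩
/-- From a countable cofinal subset, a monotone cofinal sequence. -/
lemma mono_cofinal_of_countable {G : Set (Set X)} (hch : IsChain (· ⊆ ·) G)
    {s : Set (Set X)} (hsG : s ⊆ G) (hsc : s.Countable) (hsne : s.Nonempty)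
    (hcof : ∀ g ∈ G, ∃ a ∈ s, g ⊆ a) :
    ∃ c : ℕ → Set X, (∀ k, c k ∈ G) ∧ (∀ k, c k ⊆ c (k + 1)) ∧ ∀ g ∈ G, ∃ k, g ⊆ c k := by
  obtain ⟨r, hr⟩ := hsc.exists_eq_range hsne
  have hrG : ∀ k, r k ∈ G := fun k => hsG (hr ▸ ⟨k, rfl⟩)
  let c : ℕ → Set X := fun k => Nat.rec (r 0) (fun k ck => ck ∪ r (k + 1)) k
  have hcsucc : ∀ k, c (k + 1) = c k ∪ r (k + 1) := fun k => rfl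
  have hcG : ∀ k, c k ∈ G := by
    intro k
    induction k with
    | zero => exact hrG 0
    | succ k ih =>
      rw [hcsucc]
      rcases eq_or_ne (c k) (r (k + 1)) with h | h
      · rw [h, Set.union_self]; exact hrG _
      · rcases hch ih (hrG (k + 1)) h with h' | h'
        · rw [Set.union_eq_self_of_subset_left h']; exact hrG _
        · rw [Set.union_eq_self_of_subset_right h']; exact ih
  have hrc : ∀ k, r k ⊆ c k := by
    intro k
    cases k with
    | zero => exact fun y hy => hy
    | succ k => rw [hcsucc]; exact Set.subset_union_right
  refine ⟨c, hcG, fun k => by rw [hcsucc]; exact Set.subset_union_left, fun g hg => ?_⟩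
  obtain ⟨a, has, hga⟩ := hcof g hg
  obtain ⟨k, rfl⟩ := hr ▸ has
  exact ⟨k, hga.trans (hrc k)⟩

/-- Every nonempty chain inside a short family `F` has a monotone cofinal `ℕ`-sequence. -/
lemma chain_cofinal {F G : Set (Set X)} (hGF : G ⊆ F)
    (hch : IsChain (· ⊆ ·) G) (hne : G.Nonempty)
    (hsh : ¬∃ f : (Ordinal.omega.{v} 1).ToType → Set X,
      (∀ i, f i ∈ F) ∧ ∀ i j, i < j → f i ⊂ f j) :
    ∃ c : ℕ → Set X, (∀ k, c k ∈ G) ∧ (∀ k, c k ⊆ c (k + 1)) ∧ ∀ g ∈ G, ∃ k, g ⊆ c k := by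
  classical
  by_cases hcof : ∃ s : Set (Set X), s ⊆ G ∧ s.Countable ∧ s.Nonempty ∧ ∀ g ∈ G, ∃ a ∈ s, g ⊆ a
  · obtain ⟨s, h1, h2, h3, h4⟩ := hcof
    exact mono_cofinal_of_countable hch h1 h2 h3 h4
  · exfalso
    push_neg at hcof
    have hQ : ∀ s : Set (Set X), s.Countable →
        ∃ b, b ∈ G ∧ (s ⊆ G → ∀ a ∈ s, a ⊂ b) := by
      intro s hs
      by_cases hsG : s ⊆ G
      · rcases s.eq_empty_or_nonempty with rfl | hsne
        · exact ⟨hne.some, hne.some_mem, fun _ a ha => absurd ha (Set.notMem_empty a)⟩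
        · obtain ⟨g, hgG, hgs⟩ := hcof s hsG hs hsne
          refine ⟨g, hgG, fun _ a ha => ?_⟩
          have hna : ¬ g ⊆ a := hgs a ha
          have hane : a ≠ g := by rintro rfl; exact hna (fun y hy => hy)
          rcases hch (hsG ha) hgG hane with h' | h'
          · exact ⟨h', fun hc => hna hc⟩
          · exact absurd h' hna
      · exact ⟨hne.some, hne.some_mem, fun h => absurd h hsG⟩
    obtain ⟨f, hf⟩ : ∃ f : (Ordinal.omega.{v} 1).ToType → Set X,
        ∀ i, f i ∈ G ∧ ((f '' Set.Iio i) ⊆ G → ∀ a ∈ (f '' Set.Iio i), a ⊂ f i) :=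
      omega1_rec (Q := fun (s : Set (Set X)) (b : Set X) => b ∈ G ∧ (s ⊆ G → ∀ a ∈ s, a ⊂ b)) hQ
    have hfG : ∀ i, f i ∈ G := fun i => (hf i).1
    refine hsh ⟨f, fun i => hGF (hfG i), fun i j hij => ?_⟩
    exact (hf j).2 (by rintro _ ⟨k, _, rfl⟩; exact hfG k) (f i) ⟨i, hij, rfl⟩

/-- Every nonempty chain inside `cu F` has a monotone cofinal `ℕ`-sequence,
provided `F` is narrow and short. -/
lemma cu_chain_cofinal {F : Set (Set X)}
    (hnar : ∀ A ⊆ F, (∀ a ∈ A, ∀ b ∈ A, a ≠ b → ¬a ⊆ b ∧ ¬b ⊆ a) → A.Finite)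
    (hsh : ¬∃ f : (Ordinal.omega.{v} 1).ToType → Set X,
      (∀ i, f i ∈ F) ∧ ∀ i j, i < j → f i ⊂ f j)
    {C : Set (Set X)} (hC : C ⊆ cu F) (hch : IsChain (· ⊆ ·) C) (hne : C.Nonempty) :
    ∃ c : ℕ → Set X, (∀ k, c k ∈ C) ∧ (∀ k, c k ⊆ c (k + 1)) ∧ ∀ g ∈ C, ∃ k, g ⊆ c k := by
  classical
  by_cases hcof : ∃ s : Set (Set X), s ⊆ C ∧ s.Countable ∧ s.Nonempty ∧ ∀ g ∈ C, ∃ a ∈ s, g ⊆ a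
  · obtain ⟨s, h1, h2, h3, h4⟩ := hcof
    exact mono_cofinal_of_countable hch h1 h2 h3 h4
  · exfalso
    push_neg at hcof
    have hQ : ∀ s : Set (Set X), s.Countable →
        ∃ b, b ∈ C ∧ (s ⊆ C → ∀ a ∈ s, a ⊂ b) := by
      intro s hs
      by_cases hsC : s ⊆ C
      · rcases s.eq_empty_or_nonempty with rfl | hsne
        · exact ⟨hne.some, hne.some_mem, fun _ a ha => absurd ha (Set.notMem_empty a)⟩
        · obtain ⟨g, hgC, hgs⟩ := hcof s hsC hs hsne
          refine ⟨g, hgC, fun _ a ha => ?_⟩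
          have hna : ¬ g ⊆ a := hgs a ha
          have hane : a ≠ g := by rintro rfl; exact hna (fun y hy => hy)
          rcases hch (hsC ha) hgC hane with h' | h'
          · exact ⟨h', fun hc => hna hc⟩
          · exact absurd h' hna
      · exact ⟨hne.some, hne.some_mem, fun h => absurd h hsC⟩
    obtain ⟨f, hf⟩ : ∃ f : (Ordinal.omega.{v} 1).ToType → Set X,
        ∀ i, f i ∈ C ∧ ((f '' Set.Iio i) ⊆ C → ∀ a ∈ (f '' Set.Iio i), a ⊂ f i) :=
      omega1_rec (Q := fun (s : Set (Set X)) (b : Set X) => b ∈ C ∧ (s ⊆ C → ∀ a ∈ s, a ⊂ b)) hQ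
    have hfC : ∀ i, f i ∈ C := fun i => (hf i).1
    have hfstrict : ∀ i j, i < j → f i ⊂ f j := fun i j hij =>
      (hf j).2 (by rintro _ ⟨k, _, rfl⟩; exact hfC k) (f i) ⟨i, hij, rfl⟩
    have hfmono : ∀ i j, i ≤ j → f i ⊆ f j := by
      intro i j hij
      rcases eq_or_lt_of_le hij with rfl | h
      · exact fun y hy => hy
      · exact (hfstrict i j h).1
    -- least strict upper index
    have hgt : ∀ i : (Ordinal.omega.{v} 1).ToType, ∃ j, i < j := by
      intro i
      obtain ⟨θ, hθ⟩ := exists_gt_of_countable.{v} (Set.countable_singleton i)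
      exact ⟨θ, hθ i rfl⟩
    let wf := (IsWellFounded.wf : WellFounded ((· < ·) : (Ordinal.omega.{v} 1).ToType →
      (Ordinal.omega.{v} 1).ToType → Prop))
    let σ : (Ordinal.omega.{v} 1).ToType → (Ordinal.omega.{v} 1).ToType := fun i =>
      wf.min {k | i < k} (hgt i)
    have hσgt : ∀ i, i < σ i := fun i => wf.min_mem {k | i < k} (hgt i)
    have hσle : ∀ i j, i < j → σ i ≤ j := by
      intro i j hij
      exact not_lt.1 (wf.not_lt_min {k | i < k} hij)
    -- witness chains
    have hw : ∀ i, ∃ K : Set (Set X), K ⊆ F ∧ K.Nonempty ∧ IsChain (· ⊆ ·) K ∧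
        f (σ i) = ⋃₀ K := fun i => hC (hfC (σ i))
    choose K hKF hKne hKch hKU using hw
    have hx : ∀ i, ∃ x, x ∈ f (σ i) ∧ x ∉ f i := by
      intro i
      obtain ⟨hsub, hns⟩ := hfstrict i (σ i) (hσgt i)
      obtain ⟨x, hx1, hx2⟩ := Set.not_subset.1 fun hc => hns (hc.antisymm hsub ▸ fun y hy => hy)
      exact ⟨x, hx1, hx2⟩
    choose x hx1 hx2 using hx
    have hb : ∀ i, ∃ bb, bb ∈ K i ∧ x i ∈ bb := by
      intro i
      have : x i ∈ ⋃₀ K i := (hKU i) ▸ hx1 i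
      obtain ⟨bb, h1, h2⟩ := this
      exact ⟨bb, h1, h2⟩
    choose bb hbbK hbbx using hb
    refine edm hnar hsh bb (fun i => hKF i (hbbK i)) ?_
    intro j i hji
    intro hsub
    apply hx2 i
    have h1 : bb j ⊆ f (σ j) := by
      rw [hKU j]; exact fun y hy => ⟨bb j, hbbK j, hy⟩
    have h2 : f (σ j) ⊆ f i := hfmono _ _ (hσle j i hji)
    exact h2 (h1 (hsub (hbbx i)))
theorem sUnion_chain_mem_cu {F : Set (Set X)}
    (hnar : ∀ A ⊆ F, (∀ a ∈ A, ∀ b ∈ A, a ≠ b → ¬a ⊆ b ∧ ¬b ⊆ a) → A.Finite)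
    (hsh : ¬∃ f : (Ordinal.omega.{v} 1).ToType → Set X,
      (∀ i, f i ∈ F) ∧ ∀ i j, i < j → f i ⊂ f j)
    {C : Set (Set X)} (hC : C ⊆ cu F) (hch : IsChain (· ⊆ ·) C) (hne : C.Nonempty) :
    ⋃₀ C ∈ cu F := by
  classical
  obtain ⟨c, hcC, hcm, hccof⟩ := cu_chain_cofinal hnar hsh hC hch hne
  have hcmono : Monotone c := monotone_nat_of_le_succ hcm
  have hU : ⋃₀ C = ⋃ k, c k := by
    apply subset_antisymm
    · rintro x ⟨D, hD, hxD⟩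
      obtain ⟨k, hk⟩ := hccof D hD
      exact Set.mem_iUnion.2 ⟨k, hk hxD⟩
    · exact Set.iUnion_subset fun k => Set.subset_sUnion_of_mem (hcC k)
  by_cases hconst : ∃ k, ∀ m, k ≤ m → c m ⊆ c k
  · obtain ⟨k, hk⟩ := hconst
    have heq : ⋃₀ C = c k := by
      rw [hU]
      apply subset_antisymm
      · apply Set.iUnion_subset
        intro m
        rcases le_total m k with h | h
        · exact hcmono h
        · exact hk m h
      · exact Set.subset_iUnion c k
    rw [heq]
    exact hC (hcC k)
  · push_neg at hconst
    have hstep : ∀ k, ∃ m, k < m ∧ ¬ c m ⊆ c k := by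
      intro k
      obtain ⟨m, h1, h2⟩ := hconst k
      refine ⟨m, lt_of_le_of_ne h1 ?_, h2⟩
      rintro rfl
      exact h2 (fun y hy => hy)
    choose nxt hnxt1 hnxt2 using hstep
    set idx : ℕ → ℕ := fun n => Nat.rec 0 (fun _ i => nxt i) n with hidx
    have hidxsucc : ∀ n, idx (n + 1) = nxt (idx n) := fun n => rfl
    set D : ℕ → Set X := fun n => c (idx n) with hDdef
    have hDC : ∀ n, D n ∈ C := fun n => hcC _
    have hDss : ∀ n, D n ⊂ D (n + 1) := by
      intro n
      rw [Set.ssubset_def]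
      constructor
      · show c (idx n) ⊆ c (idx (n + 1))
        rw [hidxsucc]
        exact hcmono (le_of_lt (hnxt1 (idx n)))
      · show ¬ c (idx (n + 1)) ⊆ c (idx n)
        rw [hidxsucc]
        exact hnxt2 (idx n)
    have hDmono : Monotone D := monotone_nat_of_le_succ fun n => (hDss n).1
    have hidxmono : StrictMono idx := strictMono_nat_of_lt_succ (by
      intro n; rw [hidxsucc]; exact hnxt1 (idx n))
    have hDU : ⋃₀ C = ⋃ n, D n := by
      rw [hU]
      apply subset_antisymm
      · apply Set.iUnion_subset
        intro m
        have h1 : c m ⊆ c (idx m) := hcmono (hidxmono.le_apply)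
        exact h1.trans (Set.subset_iUnion D m)
      · exact Set.iUnion_subset fun n => Set.subset_iUnion c (idx n)
    -- witness chains
    have hwc : ∀ n, ∃ K : Set (Set X), K ⊆ F ∧ K.Nonempty ∧ IsChain (· ⊆ ·) K ∧
        D n = ⋃₀ K := fun n => hC (hDC n)
    choose Cn hCnF hCnne hCnch hCnU using hwc
    set E : ℕ → Set (Set X) := fun n => {e | e ∈ Cn (n + 1) ∧ ¬ e ⊆ D n} with hEdef
    have hEF : ∀ n, E n ⊆ F := fun n e he => hCnF (n + 1) he.1
    have hEsubD : ∀ n, ∀ e ∈ E n, e ⊆ D (n + 1) := by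
      intro n e he
      rw [hCnU (n + 1)]
      exact fun y hy => ⟨e, he.1, hy⟩
    have hEne : ∀ n, (E n).Nonempty := by
      intro n
      obtain ⟨hsub, hns⟩ := Set.ssubset_def ▸ hDss n
      obtain ⟨x, hx1, hx2⟩ := Set.not_subset.1 hns
      rw [hCnU (n + 1)] at hx1
      obtain ⟨e, heC, hxe⟩ := hx1
      exact ⟨e, heC, fun hc => hx2 (hc hxe)⟩
    have hEch : ∀ n, IsChain (· ⊆ ·) (E n) := fun n a ha b hb hab =>
      hCnch (n + 1) ha.1 hb.1 hab
    have hEU : ∀ n, ⋃₀ E n = D (n + 1) := by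
      intro n
      apply subset_antisymm
      · exact Set.sUnion_subset fun e he => hEsubD n e he
      · intro x hx
        obtain ⟨e₀, he₀⟩ := hEne n
        rw [hCnU (n + 1)] at hx
        obtain ⟨t, htC, hxt⟩ := hx
        by_cases hts : t ⊆ D n
        · have hne' : t ≠ e₀ := by
            rintro rfl
            exact he₀.2 hts
          rcases hCnch (n + 1) htC he₀.1 hne' with h' | h'
          · exact ⟨e₀, he₀, h' hxt⟩
          · exact absurd (h'.trans hts) he₀.2
        · exact ⟨t, ⟨htC, hts⟩, hxt⟩
    have hrank : ∀ n m, n < m → ∀ e ∈ E n, ∀ e' ∈ E m, ¬ e' ⊆ e := by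
      intro n m hnm e he e' he' hsub
      apply he'.2
      exact (hsub.trans (hEsubD n e he)).trans (hDmono (Nat.succ_le_of_lt hnm))
    set A : ℕ → Set X → Set ℕ := fun n t => {m | n < m ∧ ∃ e ∈ E m, t ⊆ e} with hAdef
    set 𝒰 : Ultrafilter ℕ := Filter.hyperfilter ℕ with h𝒰
    have hIoi : ∀ n : ℕ, Set.Ioi n ∈ 𝒰 := by
      intro n
      apply Filter.mem_hyperfilter_of_finite_compl
      rw [Set.compl_Ioi]
      exact Set.finite_Iic n
    set Y : Set ℕ := {n | ∃ t ∈ E n, A n t ∉ 𝒰} with hYdef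
    by_cases hY : Y ∈ 𝒰
    · -- Case R: infinite antichain, contradiction
      exfalso
      have hwY : ∀ n, n ∈ Y → ∃ t, t ∈ E n ∧ A n t ∉ 𝒰 := by
        intro n hn
        obtain ⟨t, ht, hA⟩ := hn
        exact ⟨t, ht, hA⟩
      set w : ℕ → Set X := fun n =>
        if h : n ∈ Y then Classical.choose (hwY n h) else ∅ with hwdef
      have hw1 : ∀ n (h : n ∈ Y), w n ∈ E n := by
        intro n h
        rw [hwdef]; simp only [dif_pos h]
        exact (Classical.choose_spec (hwY n h)).1
      have hw2 : ∀ n (h : n ∈ Y), A n (w n) ∉ 𝒰 := by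
        intro n h
        rw [hwdef]; simp only [dif_pos h]
        exact (Classical.choose_spec (hwY n h)).2
      set Iset : ℕ → Set ℕ := fun n => (A n (w n))ᶜ ∩ Set.Ioi n with hIsetdef
      have hIset𝒰 : ∀ n, n ∈ Y → Iset n ∈ 𝒰 := by
        intro n hn
        exact inter_mem (Ultrafilter.compl_mem_iff_notMem.2 (hw2 n hn)) (hIoi n)
      have hIsetE : ∀ n m, m ∈ Iset n → n < m ∧ ∀ e ∈ E m, ¬ w n ⊆ e := by
        intro n m hm
        obtain ⟨hc, hlt⟩ := hm
        refine ⟨hlt, fun e he hsub => hc ⟨hlt, e, he, hsub⟩⟩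
      -- recursion producing the antichain
      have hRstep : ∀ T : Set ℕ, ∃ (n' : ℕ) (T' : Set ℕ),
          (T ∈ 𝒰 ∧ T ⊆ Y) → (n' ∈ T ∧ (T' ∈ 𝒰 ∧ T' ⊆ Y) ∧ T' ⊆ T ∩ Iset n') := by
        intro T
        by_cases hT : T ∈ 𝒰 ∧ T ⊆ Y
        · obtain ⟨n', hn'⟩ := Ultrafilter.nonempty_of_mem hT.1
          refine ⟨n', T ∩ Iset n', fun _ => ⟨hn', ⟨?_, ?_⟩, fun y hy => hy⟩⟩
          · exact inter_mem hT.1 (hIset𝒰 n' (hT.2 hn'))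
          · exact fun y hy => hT.2 hy.1
        · exact ⟨0, ∅, fun hc => absurd hc hT⟩
      choose stn stT hst using hRstep
      set T₀ : Set ℕ := Y with hT₀
      set sq : ℕ → ℕ × Set ℕ := fun k =>
        Nat.rec (stn T₀, stT T₀) (fun _ p => (stn p.2, stT p.2)) k with hsq
      have hsqsucc : ∀ k, sq (k + 1) = (stn (sq k).2, stT (sq k).2) := fun k => rfl
      have hinv : ∀ k, (sq k).2 ∈ 𝒰 ∧ (sq k).2 ⊆ Y ∧ (sq k).1 ∈ Y ∧
          (sq k).2 ⊆ Iset (sq k).1 := by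
        intro k
        induction k with
        | zero =>
          have h0 := hst T₀ ⟨hY, fun y hy => hy⟩
          exact ⟨h0.2.1.1, h0.2.1.2, h0.1, fun y hy => (h0.2.2 hy).2⟩
        | succ k ih =>
          have h1 := hst (sq k).2 ⟨ih.1, ih.2.1⟩
          rw [hsqsucc]
          exact ⟨h1.2.1.1, h1.2.1.2, ih.2.1 h1.1, fun y hy => (h1.2.2 hy).2⟩
      have hTdec : ∀ k, (sq (k + 1)).2 ⊆ (sq k).2 := by
        intro k
        have h1 := hst (sq k).2 ⟨(hinv k).1, (hinv k).2.1⟩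
        rw [hsqsucc]
        exact fun y hy => (h1.2.2 hy).1
      have hTle : ∀ l m, l ≤ m → (sq m).2 ⊆ (sq l).2 := by
        intro l m h
        induction m with
        | zero =>
          have : l = 0 := Nat.le_zero.1 h
          subst this; exact fun y hy => hy
        | succ m ih =>
          rcases Nat.lt_or_ge l (m + 1) with h' | h'
          · exact (hTdec m).trans (ih (Nat.lt_succ_iff.1 h'))
          · have : l = m + 1 := le_antisymm h h'
            subst this; exact fun y hy => hy
      have hnmem : ∀ k, (sq (k + 1)).1 ∈ (sq k).2 := by
        intro k
        have h1 := hst (sq k).2 ⟨(hinv k).1, (hinv k).2.1⟩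
        rw [hsqsucc]
        exact h1.1
      set NN : ℕ → ℕ := fun k => (sq k).1 with hNN
      have hNIset : ∀ l k, l < k → NN k ∈ Iset (NN l) := by
        intro l k hlk
        obtain ⟨k, rfl⟩ := Nat.exists_eq_add_of_lt hlk
        have h1 : NN (l + k + 1) ∈ (sq (l + k)).2 := hnmem (l + k)
        exact (hinv l).2.2.2 (hTle l (l + k) (Nat.le_add_right l k) h1)
      have hNY : ∀ k, NN k ∈ Y := fun k => (hinv k).2.2.1
      have hinc : ∀ l k, l < k → (¬ w (NN l) ⊆ w (NN k)) ∧ (¬ w (NN k) ⊆ w (NN l)) := by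
        intro l k hlk
        obtain ⟨hlt, hall⟩ := hIsetE _ _ (hNIset l k hlk)
        constructor
        · exact hall _ (hw1 _ (hNY k))
        · exact hrank _ _ hlt _ (hw1 _ (hNY l)) _ (hw1 _ (hNY k))
      have hinj : Function.Injective (fun k => w (NN k)) := by
        intro l k hlk
        by_contra hne'
        rcases Nat.lt_or_ge l k with h | h
        · exact (hinc l k h).1 (le_of_eq hlk)
        · have h' : k < l := lt_of_le_of_ne h (Ne.symm hne')
          exact (hinc k l h').1 (le_of_eq hlk.symm)
      have hfin := hnar (Set.range fun k => w (NN k))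
        (by rintro _ ⟨k, rfl⟩; exact hEF _ (hw1 _ (hNY k)))
        (by
          rintro _ ⟨l, rfl⟩ _ ⟨k, rfl⟩ hne'
          rcases Nat.lt_or_ge l k with h | h
          · exact (hinc l k h)
          · have h' : k < l := lt_of_le_of_ne h (by rintro rfl; exact hne' rfl)
            exact ⟨(hinc k l h').2, (hinc k l h').1⟩)
      exact (Set.infinite_range_of_injective hinj) hfin
    · -- Case W: build the covering chain
      have hZ𝒰 : Yᶜ ∈ 𝒰 := Ultrafilter.compl_mem_iff_notMem.2 hY
      set Z : Set ℕ := Yᶜ with hZdef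
      have hZ : ∀ n ∈ Z, ∀ t ∈ E n, A n t ∈ 𝒰 := by
        intro n hn t ht
        by_contra h
        exact hn ⟨t, ht, h⟩
      -- strictly increasing enumeration inside Z
      have hζstep : ∀ n : ℕ, ∃ m, m ∈ Z ∧ n < m := by
        intro n
        obtain ⟨m, hm⟩ := Ultrafilter.nonempty_of_mem (inter_mem hZ𝒰 (hIoi n))
        exact ⟨m, hm.1, hm.2⟩
      choose zn hzn1 hzn2 using hζstep
      set ζ : ℕ → ℕ := fun k => Nat.rec (zn 0) (fun _ p => zn p) k with hζdef
      have hζsucc : ∀ k, ζ (k + 1) = zn (ζ k) := fun k => rfl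
      have hζZ : ∀ k, ζ k ∈ Z := by
        intro k
        cases k with
        | zero => exact hzn1 0
        | succ k => rw [hζsucc]; exact hzn1 (ζ k)
      have hζmono : StrictMono ζ := strictMono_nat_of_lt_succ (by
        intro k; rw [hζsucc]; exact hzn2 (ζ k))
      -- cofinal sequences in each E (ζ i)
      have hccex : ∀ i : ℕ, ∃ cc : ℕ → Set X, (∀ j, cc j ∈ E (ζ i)) ∧
          (∀ j, cc j ⊆ cc (j + 1)) ∧ ∀ g ∈ E (ζ i), ∃ j, g ⊆ cc j :=
        fun i => chain_cofinal (hEF (ζ i)) (hEch (ζ i)) (hEne (ζ i)) hsh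
      choose cc hcc1 hcc2 hcc3 using hccex
      -- gluing step
      have hWstep : ∀ (l : ℕ) (hh : Set X) (i j : ℕ), ∃ (l' : ℕ) (h' : Set X),
          (l ∈ Z ∧ hh ∈ E l) →
            (l' ∈ Z ∧ h' ∈ E l' ∧ hh ⊆ h' ∧ cc i j ⊆ h') := by
        intro l hh i j
        by_cases hc : l ∈ Z ∧ hh ∈ E l
        · have hA1 : A l hh ∈ 𝒰 := hZ l hc.1 hh hc.2
          have hA2 : A (ζ i) (cc i j) ∈ 𝒰 := hZ _ (hζZ i) _ (hcc1 i j)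
          obtain ⟨l', hl'⟩ := Ultrafilter.nonempty_of_mem
            (inter_mem (inter_mem hZ𝒰 hA1) hA2)
          obtain ⟨⟨hl'Z, hl'A1⟩, hl'A2⟩ := hl'
          obtain ⟨-, e₁, he₁E, he₁⟩ := hl'A1
          obtain ⟨-, e₂, he₂E, he₂⟩ := hl'A2
          have hun : e₁ ∪ e₂ ∈ E l' := by
            rcases eq_or_ne e₁ e₂ with rfl | hne'
            · rw [Set.union_self]; exact he₁E
            · rcases hEch l' he₁E he₂E hne' with h' | h'
              · rw [Set.union_eq_self_of_subset_left h']; exact he₂E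
              · rw [Set.union_eq_self_of_subset_right h']; exact he₁E
          exact ⟨l', e₁ ∪ e₂, fun _ => ⟨hl'Z, hun,
            he₁.trans Set.subset_union_left, he₂.trans Set.subset_union_right⟩⟩
        · exact ⟨l, hh, fun hcc' => absurd hcc' hc⟩
      choose Ln Hn hLH using hWstep
      set g : ℕ → ℕ × Set X := fun k =>
        Nat.rec (ζ 0, (hEne (ζ 0)).some)
          (fun k p => (Ln p.1 p.2 (Nat.unpair k).1 (Nat.unpair k).2,
            Hn p.1 p.2 (Nat.unpair k).1 (Nat.unpair k).2)) k with hgdef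
      have hgsucc : ∀ k, g (k + 1) = (Ln (g k).1 (g k).2 (Nat.unpair k).1 (Nat.unpair k).2,
          Hn (g k).1 (g k).2 (Nat.unpair k).1 (Nat.unpair k).2) := fun k => rfl
      have hginv : ∀ k, (g k).1 ∈ Z ∧ (g k).2 ∈ E (g k).1 := by
        intro k
        induction k with
        | zero => exact ⟨hζZ 0, (hEne (ζ 0)).some_mem⟩
        | succ k ih =>
          have h1 := hLH (g k).1 (g k).2 (Nat.unpair k).1 (Nat.unpair k).2 ih
          rw [hgsucc]
          exact ⟨h1.1, h1.2.1⟩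
      have hgmono : ∀ k, (g k).2 ⊆ (g (k + 1)).2 := by
        intro k
        have h1 := hLH (g k).1 (g k).2 (Nat.unpair k).1 (Nat.unpair k).2 (hginv k)
        rw [hgsucc]
        exact h1.2.2.1
      have hgtarget : ∀ k, cc (Nat.unpair k).1 (Nat.unpair k).2 ⊆ (g (k + 1)).2 := by
        intro k
        have h1 := hLH (g k).1 (g k).2 (Nat.unpair k).1 (Nat.unpair k).2 (hginv k)
        rw [hgsucc]
        exact h1.2.2.2
      set hfun : ℕ → Set X := fun k => (g k).2 with hfundef
      have hfmono : Monotone hfun := monotone_nat_of_le_succ hgmono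
      refine ⟨Set.range hfun, ?_, ⟨hfun 0, 0, rfl⟩, ?_, ?_⟩
      · rintro _ ⟨k, rfl⟩
        exact hEF _ (hginv k).2
      · rintro _ ⟨p, rfl⟩ _ ⟨q, rfl⟩ hne'
        rcases le_total p q with h | h
        · exact Or.inl (hfmono h)
        · exact Or.inr (hfmono h)
      · apply subset_antisymm
        · intro x hx
          rw [hDU] at hx
          obtain ⟨_, ⟨m, rfl⟩, hxm⟩ := hx
          have h1 : D m ⊆ D (ζ m + 1) :=
            hDmono (Nat.le_succ_of_le (hζmono.le_apply))
          have h2 : x ∈ ⋃₀ E (ζ m) := (hEU (ζ m)).symm ▸ h1 hxm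
          obtain ⟨e, heE, hxe⟩ := h2
          obtain ⟨j, hj⟩ := hcc3 m e heE
          refine ⟨hfun (Nat.pair m j + 1), ⟨Nat.pair m j + 1, rfl⟩, ?_⟩
          have := hgtarget (Nat.pair m j)
          rw [Nat.unpair_pair] at this
          exact this (hj hxe)
        · rintro x ⟨_, ⟨k, rfl⟩, hxk⟩
          have h1 : hfun k ⊆ D ((g k).1 + 1) := hEsubD _ _ (hginv k).2
          exact Set.mem_sUnion.2 ⟨D ((g k).1 + 1), hDC ((g k).1 + 1), h1 hxk⟩

end NarrowAux
end

/-- Theorem 4.5: if for every `z ∈ X` the poset `(𝓑(z), ⊆)` is narrow and admits no strictly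
increasing `ω₁`-indexed sequence, then `(X, 𝓑)` is chain union stable. -/
theorem narrow_short_ballsAt_chainUnionStable {X : Type*} [Nonempty X]
    (B : Set (Set X)) (hball : IsBallSpace B)
    (hnarrow : ∀ z : X, IsNarrowFamily (ballsAt B z))
    (hshort : ∀ z : X, ¬∃ f : (Ordinal.omega 1).ToType → Set X,
      (∀ i, f i ∈ ballsAt B z) ∧ ∀ i j, i < j → f i ⊂ f j) :
    ChainUnionStable B := by
  classical
  unfold ChainUnionStable ChainUnionClosed
  apply Set.eq_of_subset_of_subset
  · intro U hU
    obtain ⟨C, hCsub, hCne, hCch, rfl⟩ := hU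
    have hCnonempty : ∀ D ∈ C, D.Nonempty := by
      intro D hD
      obtain ⟨K, hKB, hKne, -, rfl⟩ := hCsub hD
      obtain ⟨b, hb⟩ := hKne
      obtain ⟨x, hx⟩ := hball.2 b (hKB hb)
      exact ⟨x, b, hb, hx⟩
    obtain ⟨D₀, hD₀⟩ := hCne
    obtain ⟨z, hz⟩ := hCnonempty D₀ hD₀
    set C' : Set (Set X) := {D ∈ C | z ∈ D} with hC'def
    have hC'ne : C'.Nonempty := ⟨D₀, hD₀, hz⟩
    have hC'ch : IsChain (· ⊆ ·) C' := fun a ha b hb hne => hCch ha.1 hb.1 hne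
    have hC'U : ⋃₀ C = ⋃₀ C' := by
      apply Set.eq_of_subset_of_subset
      · rintro x ⟨D, hD, hxD⟩
        rcases eq_or_ne D D₀ with rfl | hne
        · exact ⟨D, ⟨hD, hz⟩, hxD⟩
        · rcases hCch hD hD₀ hne with h | h
          · exact ⟨D₀, ⟨hD₀, hz⟩, h hxD⟩
          · exact ⟨D, ⟨hD, h hz⟩, hxD⟩
      · exact Set.sUnion_subset fun D hD => Set.subset_sUnion_of_mem hD.1
    have hC'cu : C' ⊆ cu (ballsAt B z) := by
      intro D hD
      obtain ⟨K, hKB, hKne, hKch, rfl⟩ := hCsub hD.1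
      obtain ⟨b₀, hb₀K, hzb₀⟩ := hD.2
      refine ⟨{b ∈ K | z ∈ b}, ?_, ⟨b₀, hb₀K, hzb₀⟩,
        fun a ha b hb hne => hKch ha.1 hb.1 hne, ?_⟩
      · rintro b ⟨hbK, hzb⟩
        exact ⟨hKB hbK, hzb⟩
      · apply Set.eq_of_subset_of_subset
        · rintro x ⟨b, hbK, hxb⟩
          rcases eq_or_ne b b₀ with rfl | hne
          · exact ⟨b, ⟨hbK, hzb₀⟩, hxb⟩
          · rcases hKch hbK hb₀K hne with h | h
            · exact ⟨b₀, ⟨hb₀K, hzb₀⟩, h hxb⟩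
            · exact ⟨b, ⟨hbK, h hzb₀⟩, hxb⟩
        · rintro x ⟨b, ⟨hbK, -⟩, hxb⟩
          exact ⟨b, hbK, hxb⟩
    have hmain := NarrowAux.sUnion_chain_mem_cu (hnarrow z) (hshort z) hC'cu hC'ch hC'ne
    rw [hC'U]
    obtain ⟨K, hK1, hK2, hK3, hK4⟩ := hmain
    exact ⟨K, fun b hb => (hK1 hb).1, hK2, hK3, hK4⟩
  · intro U hU
    refine ⟨{U}, by simpa using hU, ⟨U, rfl⟩, ?_, (Set.sUnion_singleton U).symm⟩
    rintro a rfl b rfl hne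
    exact absurd rfl hne
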